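/- Let f(q) be a quaternion polynomial of degree n ≥ 1 and r > 0 a real number. Then max over |q| = r of |f'(q)| ≤ (n/r) · max over |q| = r of |f(q)|. -/

import Mathlib

open scoped Quaternion
open Quaternion Real Finset intervalIntegral

noncomputable section

lemma bern_int_cos (z : ℤ) :
    ∫ θ in (0:ℝ)..(2*π), Real.cos (z * θ) = if z = 0 then 2*π else 0 := by
  by_cases h : z = 0
  · simp [h]
  · rw [if_neg h]
    have hz : (z:ℝ) ≠ 0 := Int.cast_ne_zero.mpr h
    rw [intervalIntegral.integral_comp_mul_left (fun x => Real.cos x) hz, integral_cos]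
    have h1 : Real.sin ((z:ℝ) * (2*π)) = 0 := by
      have : ((z:ℝ) * (2*π)) = ((2*z : ℤ):ℝ) * π := by push_cast; ring
      rw [this, Real.sin_int_mul_pi]
    simp [h1]

lemma bern_int_sin (z : ℤ) :
    ∫ θ in (0:ℝ)..(2*π), Real.sin (z * θ) = 0 := by
  by_cases h : z = 0
  · simp [h]
  · have hz : (z:ℝ) ≠ 0 := Int.cast_ne_zero.mpr h
    rw [intervalIntegral.integral_comp_mul_left (fun x => Real.sin x) hz, integral_sin]
    have h1 : Real.cos ((z:ℝ) * (2*π)) = 1 := by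
      have : ((z:ℝ) * (2*π)) = ((z : ℤ):ℝ) * (2*π) := by push_cast; ring
      rw [this, Real.cos_int_mul_two_pi]
    simp [h1]

def bernF (n : ℕ) (θ : ℝ) : ℝ :=
  ∑ m ∈ range n, ∑ l ∈ range n, Real.cos ((m:ℝ) * θ - (l:ℝ) * θ)

lemma bernF_nonneg (n : ℕ) (θ : ℝ) : 0 ≤ bernF n θ := by
  have h : bernF n θ = (∑ m ∈ range n, Real.cos ((m:ℝ)*θ))^2
      + (∑ m ∈ range n, Real.sin ((m:ℝ)*θ))^2 := by
    rw [sq, sq, Finset.sum_mul_sum, Finset.sum_mul_sum, ← Finset.sum_add_distrib]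
    refine Finset.sum_congr rfl fun m _ => ?_
    rw [← Finset.sum_add_distrib]
    refine Finset.sum_congr rfl fun l _ => ?_
    rw [Real.cos_sub]
  rw [h]; positivity

lemma bernF_continuous (n : ℕ) : Continuous (bernF n) := by
  unfold bernF; fun_prop

lemma bern_cos_mul_cos (A B : ℝ) :
    Real.cos A * Real.cos B = (Real.cos (A + B) + Real.cos (A - B)) / 2 := by
  rw [Real.cos_add, Real.cos_sub]; ring

lemma bern_sin_mul_cos (A B : ℝ) :
    Real.sin A * Real.cos B = (Real.sin (A + B) + Real.sin (A - B)) / 2 := by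
  rw [Real.sin_add, Real.sin_sub]; ring

lemma bern_count (n k : ℕ) (c : ℝ) :
    ∑ m ∈ range n, (if m + k < n then c else 0) = (n - k : ℕ) * c := by
  rw [Finset.sum_ite, Finset.sum_const_zero, add_zero, Finset.sum_const]
  have : Finset.filter (fun m => m + k < n) (range n) = range (n - k) := by
    ext m; simp; omega
  rw [this, Finset.card_range, nsmul_eq_mul]

lemma bern_integral_cos_mul_F (n k : ℕ) (hk : k ≤ n) :
    ∫ θ in (0:ℝ)..(2*π), Real.cos (k*θ) * bernF n θ = 2*π*((n:ℝ) - k) := by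
  have h1 : ∀ θ : ℝ, Real.cos (k*θ) * bernF n θ = ∑ m ∈ range n, ∑ l ∈ range n,
      ((Real.cos ((((k:ℤ)+m-l:ℤ):ℝ)*θ) + Real.cos ((((k:ℤ)-m+l:ℤ):ℝ)*θ))/2) := by
    intro θ
    unfold bernF
    rw [Finset.mul_sum]
    refine Finset.sum_congr rfl fun m _ => ?_
    rw [Finset.mul_sum]
    refine Finset.sum_congr rfl fun l _ => ?_
    rw [bern_cos_mul_cos]
    congr 2
    · push_cast; ring
    · push_cast; ring
  simp only [h1]
  rw [intervalIntegral.integral_finset_sum (fun m _ => by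
    apply Continuous.intervalIntegrable; fun_prop)]
  have h2 : ∀ m ∈ range n, (∫ θ in (0:ℝ)..(2*π), ∑ l ∈ range n,
      ((Real.cos ((((k:ℤ)+m-l:ℤ):ℝ)*θ) + Real.cos ((((k:ℤ)-m+l:ℤ):ℝ)*θ))/2))
      = ∑ l ∈ range n, (((if l = m + k then (2*π) else 0) + (if m = l + k then (2*π) else 0))/2) := by
    intro m _
    rw [intervalIntegral.integral_finset_sum (fun l _ => by
      apply Continuous.intervalIntegrable; fun_prop)]
    refine Finset.sum_congr rfl fun l _ => ?_
    rw [intervalIntegral.integral_div, intervalIntegral.integral_add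
      ((by fun_prop : Continuous fun θ:ℝ => Real.cos ((((k:ℤ)+m-l:ℤ):ℝ)*θ)).intervalIntegrable _ _)
      ((by fun_prop : Continuous fun θ:ℝ => Real.cos ((((k:ℤ)-m+l:ℤ):ℝ)*θ)).intervalIntegrable _ _),
      bern_int_cos, bern_int_cos]
    congr 2
    · exact if_congr (by omega) rfl rfl
    · exact if_congr (by omega) rfl rfl
  rw [Finset.sum_congr rfl h2]
  have h3 : ∀ (S T : ℕ → ℕ → ℝ), ∑ m ∈ range n, ∑ l ∈ range n, ((S m l + T m l)/2)
      = ((∑ m ∈ range n, ∑ l ∈ range n, S m l) + (∑ m ∈ range n, ∑ l ∈ range n, T m l))/2 := by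
    intro S T
    rw [← Finset.sum_add_distrib]
    rw [Finset.sum_div]
    refine Finset.sum_congr rfl fun m _ => ?_
    rw [← Finset.sum_add_distrib, Finset.sum_div]
  rw [h3]
  have h4 : ∑ m ∈ range n, ∑ l ∈ range n, (if l = m + k then (2*π) else 0) = (n - k : ℕ) * (2*π) := by
    rw [← bern_count n k (2*π)]
    refine Finset.sum_congr rfl fun m _ => ?_
    rw [Finset.sum_ite_eq' (range n) (m+k) (fun _ => (2*π))]
    simp [Finset.mem_range]
  have h5 : ∑ m ∈ range n, ∑ l ∈ range n, (if m = l + k then (2*π) else 0) = (n - k : ℕ) * (2*π) := by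
    rw [Finset.sum_comm, ← bern_count n k (2*π)]
    refine Finset.sum_congr rfl fun l _ => ?_
    have : ∀ m, (if m = l + k then (2*π:ℝ) else 0) = (if m = l + k then (2*π) else 0) := fun _ => rfl
    rw [Finset.sum_ite_eq' (range n) (l+k) (fun _ => (2*π))]
    simp [Finset.mem_range]
  rw [h4, h5, Nat.cast_sub hk]
  ring

lemma bern_integral_sin_mul_F (n k : ℕ) :
    ∫ θ in (0:ℝ)..(2*π), Real.sin (k*θ) * bernF n θ = 0 := by
  have h1 : ∀ θ : ℝ, Real.sin (k*θ) * bernF n θ = ∑ m ∈ range n, ∑ l ∈ range n,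
      ((Real.sin ((((k:ℤ)+m-l:ℤ):ℝ)*θ) + Real.sin ((((k:ℤ)-m+l:ℤ):ℝ)*θ))/2) := by
    intro θ
    unfold bernF
    rw [Finset.mul_sum]
    refine Finset.sum_congr rfl fun m _ => ?_
    rw [Finset.mul_sum]
    refine Finset.sum_congr rfl fun l _ => ?_
    rw [bern_sin_mul_cos]
    congr 2
    · push_cast; ring
    · push_cast; ring
  simp only [h1]
  rw [intervalIntegral.integral_finset_sum (fun m _ => by
    apply Continuous.intervalIntegrable; fun_prop)]
  refine Finset.sum_eq_zero fun m _ => ?_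
  rw [intervalIntegral.integral_finset_sum (fun l _ => by
    apply Continuous.intervalIntegrable; fun_prop)]
  refine Finset.sum_eq_zero fun l _ => ?_
  rw [intervalIntegral.integral_div, intervalIntegral.integral_add
    ((by fun_prop : Continuous fun θ:ℝ => Real.sin ((((k:ℤ)+m-l:ℤ):ℝ)*θ)).intervalIntegrable _ _)
    ((by fun_prop : Continuous fun θ:ℝ => Real.sin ((((k:ℤ)-m+l:ℤ):ℝ)*θ)).intervalIntegrable _ _),
    bern_int_sin, bern_int_sin]
  norm_num


def berne (I : ℍ[ℝ]) (θ : ℝ) : ℍ[ℝ] := ((Real.cos θ : ℝ) : ℍ[ℝ]) + Real.sin θ • I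

lemma berne_mul (I : ℍ[ℝ]) (hI2 : I * I = -1) (θ φ : ℝ) :
    berne I θ * berne I φ = berne I (θ + φ) := by
  have e1 : ∀ x y : ℝ, (x:ℍ[ℝ]) * (y • I) = (x*y) • I := by
    intro x y; rw [coe_mul_eq_smul, smul_smul]
  have e2 : ∀ x y : ℝ, (x • I) * (y:ℍ[ℝ]) = (x*y) • I := by
    intro x y; rw [mul_coe_eq_smul, smul_smul, mul_comm]
  have e3 : ∀ x y : ℝ, (x • I) * (y • I) = -((x*y : ℝ) : ℍ[ℝ]) := by
    intro x y; rw [smul_mul_smul_comm, hI2, smul_neg, ← Quaternion.coe_one, smul_coe, mul_one]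
  simp only [berne, add_mul, mul_add, ← Quaternion.coe_mul, e1, e2, e3,
    Real.cos_add, Real.sin_add, Quaternion.coe_sub, add_smul]
  abel

lemma berne_zero (I : ℍ[ℝ]) : berne I 0 = 1 := by
  simp [berne]

lemma berne_pow (I : ℍ[ℝ]) (hI2 : I * I = -1) (θ : ℝ) (j : ℕ) :
    (berne I θ)^j = berne I (j * θ) := by
  induction j with
  | zero => simp [berne_zero]
  | succ k ih => rw [pow_succ, ih, berne_mul I hI2]; congr 1; push_cast; ring

lemma berne_normSq (I : ℍ[ℝ]) (hIre : I.re = 0) (hIn : normSq I = 1) (θ : ℝ) :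
    normSq (berne I θ) = 1 := by
  have h := hIn
  rw [normSq_def'] at h ⊢
  simp only [berne, re_add, imI_add, imJ_add, imK_add, re_coe, imI_coe, imJ_coe, imK_coe,
    re_smul, imI_smul, imJ_smul, imK_smul, smul_eq_mul, hIre]
  rw [hIre] at h
  nlinarith [Real.sin_sq_add_cos_sq θ]

lemma berne_norm (I : ℍ[ℝ]) (hIre : I.re = 0) (hIn : normSq I = 1) (θ : ℝ) :
    ‖berne I θ‖ = 1 := by
  have h : ‖berne I θ‖ * ‖berne I θ‖ = 1 := by
    rw [← Quaternion.normSq_eq_norm_mul_self, berne_normSq I hIre hIn]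
  rcases mul_self_eq_one_iff.mp h with h1 | h1
  · exact h1
  · nlinarith [norm_nonneg (berne I θ)]

lemma bern_exists_I (q : ℍ[ℝ]) : ∃ I : ℍ[ℝ], I * I = -1 ∧ I.re = 0 ∧ Commute q I := by
  have him : Commute q q.im := by
    have h : q.im = q - (q.re : ℍ[ℝ]) := by
      rw [← Quaternion.re_add_im q]
      rw [Quaternion.re_add_im q]
      simp
    rw [h]
    exact (Commute.refl q).sub_right (Quaternion.coe_commute q.re q).symm
  by_cases h : q.im = 0
  · refine ⟨⟨0,1,0,0⟩, ?_, rfl, ?_⟩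
    · change (⟨0,1,0,0⟩ : ℍ[ℝ]) * ⟨0,1,0,0⟩ = -1
      ext <;> simp
    · have hq : q = ((q.re : ℝ) : ℍ[ℝ]) := by
        conv_lhs => rw [← Quaternion.re_add_im q, h, add_zero]
      rw [hq]
      exact Quaternion.coe_commute q.re _
  · have hn : ‖q.im‖ ≠ 0 := norm_ne_zero_iff.mpr h
    refine ⟨‖q.im‖⁻¹ • q.im, ?_, ?_, him.smul_right _⟩
    · rw [smul_mul_smul_comm]
      have h2 : q.im * q.im = -((normSq q.im : ℝ) : ℍ[ℝ]) := by
        have h3 := Quaternion.im_sq q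
        rwa [sq] at h3
      rw [h2, smul_neg, Quaternion.normSq_eq_norm_mul_self, smul_coe]
      field_simp
      simp
    · simp

lemma bern_re_le_norm (q : ℍ[ℝ]) : q.re ≤ ‖q‖ := by
  have h1 : q.re^2 ≤ normSq q := by
    rw [Quaternion.normSq_def']
    nlinarith [sq_nonneg q.imI, sq_nonneg q.imJ, sq_nonneg q.imK]
  have h2 := Quaternion.normSq_eq_norm_mul_self q
  nlinarith [norm_nonneg q]

lemma bern_normSq_I {I : ℍ[ℝ]} (hI2 : I * I = -1) : normSq I = 1 := by
  have h : normSq I * normSq I = 1 := by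
    rw [← map_mul, hI2]
    simp [Quaternion.normSq_neg]
  nlinarith [Quaternion.normSq_nonneg (a := I)]

lemma bern_range_succ_eq (n : ℕ) : Finset.range (n+1) = insert 0 (Finset.Icc 1 n) := by
  ext m; simp [Finset.mem_range, Finset.mem_Icc]; omega



lemma bern_sum_re {ι : Type*} (s : Finset ι) (f : ι → ℍ[ℝ]) :
    (∑ i ∈ s, f i).re = ∑ i ∈ s, (f i).re := by
  induction s using Finset.cons_induction with
  | empty => simp
  | cons a s ha ih => rw [Finset.sum_cons, Finset.sum_cons, Quaternion.re_add, ih]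

lemma bern_key (n : ℕ) (hn : 1 ≤ n) (b : ℕ → ℍ[ℝ]) (r : ℝ) (hr : 0 < r)
    (q₀ : ℍ[ℝ]) (hq : ‖q₀‖ = r) (M : ℝ)
    (hM : ∀ q : ℍ[ℝ], ‖q‖ = r → ‖∑ j ∈ Finset.range (n+1), q ^ j * b j‖ ≤ M) :
    ‖∑ j ∈ Finset.Icc 1 n, (j : ℍ[ℝ]) * q₀ ^ (j-1) * b j‖ ≤ (n / r) * M := by
  have hM0 : 0 ≤ M := by
    refine le_trans (norm_nonneg _) (hM ((r:ℝ) : ℍ[ℝ]) ?_)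
    rw [Quaternion.norm_coe, Real.norm_eq_abs, abs_of_pos hr]
  set D : ℍ[ℝ] := ∑ j ∈ Finset.Icc 1 n, (j : ℍ[ℝ]) * q₀ ^ (j-1) * b j with hD_def
  by_cases hD : D = 0
  · rw [hD, norm_zero]; positivity
  have hDn : ‖D‖ ≠ 0 := norm_ne_zero_iff.mpr hD
  obtain ⟨I, hI2, hIre, hcomm⟩ := bern_exists_I q₀
  have hIn : normSq I = 1 := bern_normSq_I hI2
  obtain ⟨u, hu, hDu⟩ : ∃ u : ℍ[ℝ], ‖u‖ = 1 ∧ D * u = ((‖D‖ : ℝ) : ℍ[ℝ]) := by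
    refine ⟨‖D‖⁻¹ • star D, ?_, ?_⟩
    · rw [norm_smul, Quaternion.norm_star, norm_inv, norm_norm]
      field_simp
    · rw [mul_smul_comm, Quaternion.self_mul_star, Quaternion.normSq_eq_norm_mul_self,
        smul_coe]
      congr 1
      field_simp
  have hce : ∀ θ : ℝ, Commute q₀ (berne I θ) := fun θ =>
    ((Quaternion.coe_commute (Real.cos θ) q₀).symm).add_right (hcomm.smul_right (Real.sin θ))
  set A : ℕ → ℝ := fun j => (star q₀ * (q₀^j * (b j * u))).re with hA_def
  set B : ℕ → ℝ := fun j => (star q₀ * (q₀^j * (I * (b j * u)))).re with hB_def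
  set g : ℝ → ℝ := fun θ => ∑ j ∈ Finset.range (n+1),
    (Real.cos (((n:ℝ)-j)*θ) * A j + Real.sin (((n:ℝ)-j)*θ) * B j) with hg_def
  -- pointwise expansion
  have hexp : ∀ θ : ℝ, g θ =
      (star q₀ * (berne I ((n:ℝ)*θ) * ((∑ j ∈ Finset.range (n+1),
        (q₀ * berne I (-θ))^j * b j) * u))).re := by
    intro θ
    rw [Finset.sum_mul, Finset.mul_sum, Finset.mul_sum, bern_sum_re, hg_def]
    refine (Finset.sum_congr rfl fun j hj => ?_).symm
    have e1 : (q₀ * berne I (-θ))^j * b j * u = q₀^j * (berne I ((-(j:ℝ))*θ) * (b j * u)) := by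
      rw [(hce (-θ)).mul_pow, berne_pow I hI2]
      have harg : (j:ℝ) * -θ = (-(j:ℝ))*θ := by ring
      rw [harg, mul_assoc, mul_assoc]
    rw [e1, ← mul_assoc (berne I ((n:ℝ)*θ)), ((hce ((n:ℝ)*θ)).symm.pow_right j).eq,
      mul_assoc (q₀^j), ← mul_assoc (berne I ((n:ℝ)*θ)), berne_mul I hI2]
    have harg2 : (n:ℝ)*θ + (-(j:ℝ))*θ = ((n:ℝ)-(j:ℝ))*θ := by ring
    rw [harg2]
    have e3 : berne I (((n:ℝ)-(j:ℝ))*θ) * (b j * u)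
        = Real.cos (((n:ℝ)-(j:ℝ))*θ) • (b j * u)
          + Real.sin (((n:ℝ)-(j:ℝ))*θ) • (I * (b j * u)) := by
      rw [berne, add_mul, coe_mul_eq_smul, smul_mul_assoc]
    rw [e3]
    simp only [mul_add, mul_smul_comm, Quaternion.re_add, Quaternion.re_smul, smul_eq_mul]
    rfl
  -- integral identity
  have hint : ∫ θ in (0:ℝ)..(2*π), g θ * bernF n θ
      = 2*π * ∑ j ∈ Finset.range (n+1), (j:ℝ) * A j := by
    have hF := bernF_continuous n
    have h1 : ∀ θ : ℝ, g θ * bernF n θ = ∑ j ∈ Finset.range (n+1),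
        (A j * (Real.cos (((n:ℝ)-j)*θ) * bernF n θ)
          + B j * (Real.sin (((n:ℝ)-j)*θ) * bernF n θ)) := by
      intro θ
      rw [hg_def, Finset.sum_mul]
      exact Finset.sum_congr rfl fun j _ => by ring
    simp only [h1]
    rw [intervalIntegral.integral_finset_sum (fun j _ => by
      apply Continuous.intervalIntegrable; fun_prop)]
    rw [Finset.mul_sum]
    refine Finset.sum_congr rfl fun j hj => ?_
    have hjn : j ≤ n := by simp [Finset.mem_range] at hj; omega
    have hcast : ((n:ℝ)-(j:ℝ)) = (((n-j:ℕ)):ℝ) := by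
      rw [Nat.cast_sub hjn]
    rw [intervalIntegral.integral_add
      ((by fun_prop : Continuous fun θ:ℝ => A j * (Real.cos (((n:ℝ)-j)*θ) * bernF n θ)).intervalIntegrable _ _)
      ((by fun_prop : Continuous fun θ:ℝ => B j * (Real.sin (((n:ℝ)-j)*θ) * bernF n θ)).intervalIntegrable _ _),
      intervalIntegral.integral_const_mul, intervalIntegral.integral_const_mul, hcast,
      bern_integral_cos_mul_F n (n-j) (Nat.sub_le n j), bern_integral_sin_mul_F n (n-j)]
    rw [Nat.cast_sub hjn]
    ring
  -- sum identity
  have hsum : ∑ j ∈ Finset.range (n+1), (j:ℝ) * A j = r^2 * ‖D‖ := by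
    have h2 : ∑ j ∈ Finset.range (n+1), (j:ℝ) * A j
        = (star q₀ * ((∑ j ∈ Finset.range (n+1), (j:ℝ) • (q₀^j * b j)) * u)).re := by
      rw [Finset.sum_mul, Finset.mul_sum, bern_sum_re]
      refine Finset.sum_congr rfl fun j _ => ?_
      rw [smul_mul_assoc, mul_smul_comm, Quaternion.re_smul, smul_eq_mul, mul_assoc]
    have h3 : (∑ j ∈ Finset.range (n+1), (j:ℝ) • (q₀^j * b j)) = q₀ * D := by
      rw [hD_def, Finset.mul_sum, bern_range_succ_eq, Finset.sum_insert (by simp)]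
      simp only [Nat.cast_zero, zero_smul, zero_add]
      refine Finset.sum_congr rfl fun j hj => ?_
      have hj1 : 1 ≤ j := (Finset.mem_Icc.mp hj).1
      have hpow : q₀ * q₀^(j-1) = q₀^j := by
        rw [← pow_succ']
        congr 1
        omega
      rw [← Quaternion.coe_natCast, coe_mul_eq_smul, smul_mul_assoc, mul_smul_comm,
        ← mul_assoc, hpow]
    rw [h2, h3, mul_assoc, hDu, ← mul_assoc, Quaternion.star_mul_self, ← Quaternion.coe_mul,
      Quaternion.re_coe, Quaternion.normSq_eq_norm_mul_self, hq]
    ring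
  -- pointwise bound
  have hbd : ∀ θ : ℝ, g θ ≤ r * M := by
    intro θ
    rw [hexp θ]
    refine le_trans (bern_re_le_norm _) ?_
    rw [norm_mul, norm_mul, norm_mul, Quaternion.norm_star, hq, berne_norm I hIre hIn, hu,
      one_mul, mul_one]
    have hq' : ‖q₀ * berne I (-θ)‖ = r := by
      rw [norm_mul, berne_norm I hIre hIn, hq, mul_one]
    exact mul_le_mul_of_nonneg_left (hM _ hq') hr.le
  -- integral comparison
  have hcmp : ∫ θ in (0:ℝ)..(2*π), g θ * bernF n θ ≤ 2*π*(n:ℝ) * (r * M) := by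
    have hF := bernF_continuous n
    have hgc : Continuous g := by
      rw [hg_def]
      apply continuous_finset_sum
      intro j _
      fun_prop
    have hFint : ∫ θ in (0:ℝ)..(2*π), bernF n θ = 2*π*(n:ℝ) := by
      have h0 := bern_integral_cos_mul_F n 0 (Nat.zero_le n)
      simpa using h0
    have hle : ∫ θ in (0:ℝ)..(2*π), g θ * bernF n θ
        ≤ ∫ θ in (0:ℝ)..(2*π), (r*M) * bernF n θ := by
      apply intervalIntegral.integral_mono_on (by positivity)
        ((hgc.mul hF).intervalIntegrable _ _)
        ((continuous_const.mul hF).intervalIntegrable _ _)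
      intro θ _
      exact mul_le_mul_of_nonneg_right (hbd θ) (bernF_nonneg n θ)
    rw [intervalIntegral.integral_const_mul, hFint] at hle
    calc ∫ θ in (0:ℝ)..(2*π), g θ * bernF n θ ≤ r*M*(2*π*(n:ℝ)) := hle
      _ = 2*π*(n:ℝ)*(r*M) := by ring
  rw [hint, hsum] at hcmp
  have hπ := Real.pi_pos
  have h3 : (0:ℝ) < 2*π*r := by positivity
  have h4 : (2*π*r)*(r*‖D‖) ≤ (2*π*r)*((n:ℝ)*M) := by nlinarith [hcmp]
  have h5 := le_of_mul_le_mul_left h4 h3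
  rw [div_mul_eq_mul_div, le_div_iff₀ hr]
  nlinarith [h5]

end

/-- Bernstein's inequality on the sphere of radius `r` for quaternion
polynomials: `max_{‖q‖=r} ‖f'(q)‖ ≤ (n/r) max_{‖q‖=r} ‖f(q)‖`, where
`f(q) = ∑_{j=0}^n q^j a_j` with `a_n ≠ 0` and
`f'(q) = ∑_{j=1}^n j q^{j-1} a_j`. -/
theorem stmt_11 (n : ℕ) (hn : 1 ≤ n) (a : ℕ → ℍ[ℝ]) (han : a n ≠ 0)
    (r : ℝ) (hr : 0 < r) :
    sSup {y : ℝ | ∃ q : ℍ[ℝ], ‖q‖ = r ∧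
        y = ‖∑ j ∈ Finset.Icc 1 n, (j : ℍ[ℝ]) * q ^ (j - 1) * a j‖}
      ≤ (n / r) *
        sSup {y : ℝ | ∃ q : ℍ[ℝ], ‖q‖ = r ∧
          y = ‖∑ j ∈ Finset.range (n + 1), q ^ j * a j‖} := by
  set Bs : Set ℝ := {y : ℝ | ∃ q : ℍ[ℝ], ‖q‖ = r ∧
    y = ‖∑ j ∈ Finset.range (n + 1), q ^ j * a j‖} with hBs
  have hbdd : BddAbove Bs := by
    refine ⟨∑ j ∈ Finset.range (n+1), r^j * ‖a j‖, ?_⟩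
    rintro y ⟨q, hq, rfl⟩
    refine le_trans (norm_sum_le _ _) ?_
    refine Finset.sum_le_sum fun j _ => ?_
    rw [norm_mul, norm_pow, hq]
  have hM : ∀ q : ℍ[ℝ], ‖q‖ = r → ‖∑ j ∈ Finset.range (n+1), q ^ j * a j‖ ≤ sSup Bs :=
    fun q hq => le_csSup hbdd ⟨q, hq, rfl⟩
  have hM0 : 0 ≤ sSup Bs := by
    refine le_trans (norm_nonneg (∑ j ∈ Finset.range (n+1), ((r:ℝ):ℍ[ℝ]) ^ j * a j)) (hM _ ?_)
    rw [Quaternion.norm_coe, Real.norm_eq_abs, abs_of_pos hr]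
  apply Real.sSup_le
  · rintro y ⟨q₀, hq₀, rfl⟩
    exact bern_key n hn a r hr q₀ hq₀ (sSup Bs) hM
  · exact mul_nonneg (div_nonneg (Nat.cast_nonneg n) hr.le) hM0
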